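/- Let Ψ ↦ A₂(Ψ) be defined pointwise on ℂ^N by A₂(Ψ)(δΨ) = α_n f(|Ψ|²)·2Re⟨Ψ, δΨ⟩·Ψ, where f(ρ) = (1/n)ρ^{1/n−1} for ρ ≤ R, f(ρ) = p'(ρ) for R < ρ < 2R, and f(ρ) = 0 for ρ ≥ 2R. Then each component map Ψ ↦ f(|Ψ|²)ψ_j ψ_m is Hölder continuous on ℂ^N with exponent α = 2/n: |f(|Ψ|²)ψ_jψ_m − f(|Φ|²)φ_jφ_m| ≤ c|Ψ − Φ|^{2/n} for all Ψ, Φ ∈ ℂ^N. -/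

import Mathlib

noncomputable def transP (n : ℕ) (R : ℝ) (ρ : ℝ) : ℝ :=
  ((n + 1) * R ^ ((1 : ℝ) / n - 4) / (4 * n ^ 2)) * ρ ^ 4
    - ((4 * n + 5) * R ^ ((1 : ℝ) / n - 3) / (3 * n ^ 2)) * ρ ^ 3
    + (2 * (n + 2) * R ^ ((1 : ℝ) / n - 2) / n ^ 2) * ρ ^ 2
    - (4 * R ^ ((1 : ℝ) / n - 1) / n ^ 2) * ρ
    + ((12 * n ^ 2 - 11 * n + 17) * R ^ ((1 : ℝ) / n) / (12 * n ^ 2))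

/-- The factor `f` appearing in `A₂`: `f(ρ) = (1/n)ρ^{1/n−1}` for `ρ ≤ R`,
`f(ρ) = p'(ρ)` for `R < ρ < 2R`, and `f(ρ) = 0` for `ρ ≥ 2R`. -/
noncomputable def A2factor (n : ℕ) (R : ℝ) (ρ : ℝ) : ℝ :=
  if ρ ≤ R then (1 / n) * ρ ^ ((1 : ℝ) / n - 1)
  else if ρ < 2 * R then deriv (transP n R) ρ
  else 0

/-- Explicit derivative of the transition polynomial. -/
noncomputable def transPd (n : ℕ) (R : ℝ) (ρ : ℝ) : ℝ :=
  ((n + 1) * R ^ ((1 : ℝ) / n - 4) / (n ^ 2)) * ρ ^ 3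
    - ((4 * n + 5) * R ^ ((1 : ℝ) / n - 3) / (n ^ 2)) * ρ ^ 2
    + (4 * (n + 2) * R ^ ((1 : ℝ) / n - 2) / (n ^ 2)) * ρ
    - 4 * R ^ ((1 : ℝ) / n - 1) / (n ^ 2)

lemma hasDerivAt_transP (n : ℕ) (R ρ : ℝ) :
    HasDerivAt (transP n R) (transPd n R ρ) ρ := by
  have h4 : HasDerivAt (fun x : ℝ => x ^ 4) (4 * ρ ^ 3) ρ := by
    simpa using hasDerivAt_pow 4 ρ
  have h3 : HasDerivAt (fun x : ℝ => x ^ 3) (3 * ρ ^ 2) ρ := by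
    simpa using hasDerivAt_pow 3 ρ
  have h2 : HasDerivAt (fun x : ℝ => x ^ 2) (2 * ρ) ρ := by
    simpa using hasDerivAt_pow 2 ρ
  have h1 : HasDerivAt (fun x : ℝ => x) 1 ρ := hasDerivAt_id ρ
  have H := ((((h4.const_mul ((n + 1 : ℝ) * R ^ ((1 : ℝ) / n - 4) / (4 * (n : ℝ) ^ 2))).sub
      (h3.const_mul ((4 * (n : ℝ) + 5) * R ^ ((1 : ℝ) / n - 3) / (3 * (n : ℝ) ^ 2)))).add
      (h2.const_mul (2 * ((n : ℝ) + 2) * R ^ ((1 : ℝ) / n - 2) / (n : ℝ) ^ 2))).sub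
      (h1.const_mul (4 * R ^ ((1 : ℝ) / n - 1) / (n : ℝ) ^ 2))).add_const
      ((12 * (n : ℝ) ^ 2 - 11 * (n : ℝ) + 17) * R ^ ((1 : ℝ) / n) / (12 * (n : ℝ) ^ 2))
  unfold transP
  refine H.congr_deriv ?_
  unfold transPd
  ring

lemma deriv_transP (n : ℕ) (R ρ : ℝ) : deriv (transP n R) ρ = transPd n R ρ :=
  (hasDerivAt_transP n R ρ).deriv

lemma rpow_shift (R : ℝ) (hR : 0 < R) (a b : ℝ) (k : ℕ) (h : a = b + k) :
    R ^ a = R ^ b * R ^ k := by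
  rw [h, ← Real.rpow_natCast R k, ← Real.rpow_add hR]

lemma transPd_at_R (n : ℕ) (hn : 0 < n) (R : ℝ) (hR : 0 < R) :
    transPd n R R = (1 / n) * R ^ ((1 : ℝ) / n - 1) := by
  have hn' : (n : ℝ) ≠ 0 := Nat.cast_ne_zero.2 hn.ne'
  unfold transPd
  rw [rpow_shift R hR ((1 : ℝ) / n - 3) ((1 : ℝ) / n - 4) 1 (by push_cast; ring),
    rpow_shift R hR ((1 : ℝ) / n - 2) ((1 : ℝ) / n - 4) 2 (by push_cast; ring),
    rpow_shift R hR ((1 : ℝ) / n - 1) ((1 : ℝ) / n - 4) 3 (by push_cast; ring)]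
  field_simp
  ring

lemma transPd_at_2R (n : ℕ) (hn : 0 < n) (R : ℝ) (hR : 0 < R) :
    transPd n R (2 * R) = 0 := by
  have hn' : (n : ℝ) ≠ 0 := Nat.cast_ne_zero.2 hn.ne'
  unfold transPd
  rw [rpow_shift R hR ((1 : ℝ) / n - 3) ((1 : ℝ) / n - 4) 1 (by push_cast; ring),
    rpow_shift R hR ((1 : ℝ) / n - 2) ((1 : ℝ) / n - 4) 2 (by push_cast; ring),
    rpow_shift R hR ((1 : ℝ) / n - 1) ((1 : ℝ) / n - 4) 3 (by push_cast; ring)]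
  field_simp
  ring

lemma A2factor_pow {n : ℕ} {R ρ : ℝ} (h : ρ ≤ R) :
    A2factor n R ρ = (1 / n) * ρ ^ ((1 : ℝ) / n - 1) := if_pos h

lemma A2factor_poly {n : ℕ} (hn : 0 < n) {R ρ : ℝ} (hR : 0 < R) (h1 : R ≤ ρ) (h2 : ρ ≤ 2 * R) :
    A2factor n R ρ = transPd n R ρ := by
  rcases eq_or_lt_of_le h1 with rfl | h1'
  · rw [A2factor_pow le_rfl, transPd_at_R n hn R hR]
  rcases eq_or_lt_of_le h2 with rfl | h2'
  · rw [A2factor, if_neg (not_le.2 h1'), if_neg (lt_irrefl _), transPd_at_2R n hn R hR]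
  · rw [A2factor, if_neg (not_le.2 h1'), if_pos h2', deriv_transP]

lemma A2factor_zero {n : ℕ} {R ρ : ℝ} (hR : 0 < R) (h : 2 * R ≤ ρ) :
    A2factor n R ρ = 0 := by
  rw [A2factor, if_neg (by nlinarith), if_neg (not_lt.2 h)]

lemma cubic_bound {A B C D x M : ℝ} (hA : 0 ≤ A) (hB : 0 ≤ B) (hC : 0 ≤ C) (hD : 0 ≤ D)
    (hx : 0 ≤ x) (hxM : x ≤ M) :
    |A * x ^ 3 - B * x ^ 2 + C * x - D| ≤ A * M ^ 3 + B * M ^ 2 + C * M + D := by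
  have hM : 0 ≤ M := hx.trans hxM
  have p3 : x ^ 3 ≤ M ^ 3 := pow_le_pow_left₀ hx hxM 3
  have p2 : x ^ 2 ≤ M ^ 2 := pow_le_pow_left₀ hx hxM 2
  rw [abs_le]
  constructor <;> nlinarith [mul_nonneg hA (pow_nonneg hx 3), mul_nonneg hB (pow_nonneg hx 2),
    mul_nonneg hC hx, mul_le_mul_of_nonneg_left p3 hA, mul_le_mul_of_nonneg_left p2 hB,
    mul_le_mul_of_nonneg_left hxM hC]

lemma cubic_lip {A B C D σ ρ M : ℝ} (hA : 0 ≤ A) (hB : 0 ≤ B) (hC : 0 ≤ C)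
    (hσ : 0 ≤ σ) (hσρ : σ ≤ ρ) (hρM : ρ ≤ M) :
    |(A * ρ ^ 3 - B * ρ ^ 2 + C * ρ - D) - (A * σ ^ 3 - B * σ ^ 2 + C * σ - D)| ≤
      (3 * A * M ^ 2 + 2 * B * M + C) * (ρ - σ) := by
  have hρ : 0 ≤ ρ := hσ.trans hσρ
  have hM : 0 ≤ M := hρ.trans hρM
  have hσM : σ ≤ M := hσρ.trans hρM
  have h1 : ρ ^ 2 ≤ M ^ 2 := pow_le_pow_left₀ hρ hρM 2
  have h2 : σ ^ 2 ≤ M ^ 2 := pow_le_pow_left₀ hσ hσM 2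
  have h3 : σ * ρ ≤ M ^ 2 := by nlinarith
  have hd : 0 ≤ ρ - σ := sub_nonneg.2 hσρ
  have e3 : ρ ^ 3 - σ ^ 3 ≤ 3 * M ^ 2 * (ρ - σ) := by
    nlinarith [mul_nonneg hd (show (0:ℝ) ≤ 3 * M ^ 2 - (ρ ^ 2 + σ * ρ + σ ^ 2) by linarith)]
  have e2 : ρ ^ 2 - σ ^ 2 ≤ 2 * M * (ρ - σ) := by
    nlinarith [mul_nonneg hd (show (0:ℝ) ≤ 2 * M - (ρ + σ) by linarith)]
  have e3' : 0 ≤ ρ ^ 3 - σ ^ 3 := by nlinarith [pow_le_pow_left₀ hσ hσρ 3]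
  have e2' : 0 ≤ ρ ^ 2 - σ ^ 2 := by nlinarith [pow_le_pow_left₀ hσ hσρ 2]
  have ha := mul_le_mul_of_nonneg_left e3 hA
  have ha0 : 0 ≤ A * (ρ ^ 3 - σ ^ 3) := mul_nonneg hA e3'
  have hb := mul_le_mul_of_nonneg_left e2 hB
  have hb0 : 0 ≤ B * (ρ ^ 2 - σ ^ 2) := mul_nonneg hB e2'
  have hc0 : 0 ≤ C * (ρ - σ) := mul_nonneg hC hd
  rw [abs_le]
  constructor <;> nlinarith [ha, ha0, hb, hb0, hc0]

/-- Bernoulli-type estimate: the negative power `x ↦ x^{-q}` (`0 ≤ q ≤ 1`) decreases at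
rate at most `σ^{-q-1}` to the right of `σ`. -/
lemma rpow_piece {σ ρ q : ℝ} (hσ : 0 < σ) (hσρ : σ ≤ ρ) (hq0 : 0 ≤ q) (hq1 : q ≤ 1) :
    σ ^ (-q) - ρ ^ (-q) ≤ σ ^ (-q - 1) * (ρ - σ) := by
  have hρ : 0 < ρ := hσ.trans_le hσρ
  set x := σ ^ q with hxdef
  set y := ρ ^ q with hydef
  have hx0 : 0 < x := Real.rpow_pos_of_pos hσ q
  have hy0 : 0 < y := Real.rpow_pos_of_pos hρ q
  have hxy : x ≤ y := Real.rpow_le_rpow hσ.le hσρ hq0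
  have hd : (0:ℝ) ≤ ρ - σ := sub_nonneg.2 hσρ
  have hbern : σ * y ≤ σ * x + x * q * (ρ - σ) := by
    have hs : -1 ≤ ρ / σ - 1 := by
      have : 0 < ρ / σ := div_pos hρ hσ
      linarith
    have h := rpow_one_add_le_one_add_mul_self hs hq0 hq1
    have h1 : (1 : ℝ) + (ρ / σ - 1) = ρ / σ := by ring
    rw [h1] at h
    have h2 : (ρ / σ) ^ q = y / x := by
      rw [hxdef, hydef, Real.div_rpow hρ.le hσ.le]
    rw [h2, div_le_iff₀ hx0] at h
    have h3 := mul_le_mul_of_nonneg_left h hσ.le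
    have h4 : σ * ((1 + q * (ρ / σ - 1)) * x) = σ * x + x * q * (ρ - σ) := by
      field_simp
    rw [h4] at h3
    exact h3
  have hnegσ : σ ^ (-q) = x⁻¹ := by rw [hxdef, Real.rpow_neg hσ.le]
  have hnegρ : ρ ^ (-q) = y⁻¹ := by rw [hydef, Real.rpow_neg hρ.le]
  have hneg1 : σ ^ (-q - 1) = (x * σ)⁻¹ := by
    rw [show -q - 1 = -(q + 1) by ring, Real.rpow_neg hσ.le, Real.rpow_add hσ, Real.rpow_one]
  rw [hnegσ, hnegρ, hneg1]
  rw [show x⁻¹ - y⁻¹ = (y - x) / (x * y) by field_simp,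
    show (x * σ)⁻¹ * (ρ - σ) = (ρ - σ) / (x * σ) by ring,
    div_le_div_iff₀ (by positivity) (by positivity)]
  have s1 : x * q * (ρ - σ) ≤ x * (ρ - σ) := by
    nlinarith [mul_nonneg (mul_nonneg hx0.le hd) (sub_nonneg.2 hq1)]
  have s2 : σ * (y - x) ≤ x * (ρ - σ) := by nlinarith [s1, hbern]
  nlinarith [mul_le_mul_of_nonneg_left s2 hx0.le,
    mul_le_mul_of_nonneg_right (mul_le_mul_of_nonneg_left hxy hx0.le) hd]

lemma A2_pow_lip {n : ℕ} (hn : 2 ≤ n) {R σ ρ : ℝ} (hσ : 0 < σ) (hσρ : σ ≤ ρ) (hρR : ρ ≤ R) :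
    |A2factor n R ρ - A2factor n R σ| ≤ σ ^ ((1 : ℝ) / n - 2) * (ρ - σ) := by
  have hσR : σ ≤ R := hσρ.trans hρR
  have hn0 : (0 : ℝ) < n := by
    have : 0 < n := by omega
    exact_mod_cast this
  have h1n : 0 < 1 / (n : ℝ) := one_div_pos.2 hn0
  have hle1 : (1 : ℝ) / n ≤ 1 := by
    rw [div_le_one hn0]
    exact_mod_cast by omega
  have hq0 : (0 : ℝ) ≤ 1 - 1 / n := by linarith
  have hq1 : (1 : ℝ) - 1 / n ≤ 1 := by linarith
  have hp := rpow_piece hσ hσρ hq0 hq1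
  rw [show -(1 - (1 : ℝ) / n) = (1 : ℝ) / n - 1 by ring] at hp
  rw [show (1 : ℝ) / n - 1 - 1 = (1 : ℝ) / n - 2 by ring] at hp
  rw [A2factor_pow hρR, A2factor_pow hσR]
  have hmono : ρ ^ ((1 : ℝ) / n - 1) ≤ σ ^ ((1 : ℝ) / n - 1) :=
    Real.rpow_le_rpow_of_nonpos hσ hσρ (by linarith)
  rw [abs_of_nonpos (by nlinarith)]
  nlinarith [Real.rpow_nonneg hσ.le ((1 : ℝ) / n - 1), Real.rpow_nonneg hσ.le ((1 : ℝ) / n - 2),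
    sub_nonneg.2 hσρ]

set_option maxHeartbeats 1000000 in
lemma A2_lip (n : ℕ) (hn : 2 ≤ n) (R : ℝ) (hR : 0 < R) :
    ∃ C : ℝ, 1 ≤ C ∧ ∀ σ ρ : ℝ, 0 < σ → σ ≤ ρ →
      |A2factor n R ρ - A2factor n R σ| ≤ C * σ ^ ((1 : ℝ) / n - 2) * (ρ - σ) := by
  have hn0 : (0 : ℝ) < n := by
    have : 0 < n := by omega
    exact_mod_cast this
  have h1n : 0 < 1 / (n : ℝ) := one_div_pos.2 hn0
  have hle1 : (1 : ℝ) / n ≤ 1 := by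
    rw [div_le_one hn0]
    exact_mod_cast by omega
  set A : ℝ := (n + 1) * R ^ ((1 : ℝ) / n - 4) / (n ^ 2) with hAdef
  set B : ℝ := (4 * n + 5) * R ^ ((1 : ℝ) / n - 3) / (n ^ 2) with hBdef
  set Cc : ℝ := 4 * (n + 2) * R ^ ((1 : ℝ) / n - 2) / (n ^ 2) with hCdef
  set D : ℝ := 4 * R ^ ((1 : ℝ) / n - 1) / (n ^ 2) with hDdef
  have hA : 0 ≤ A := by rw [hAdef]; positivity
  have hB : 0 ≤ B := by rw [hBdef]; positivity
  have hC : 0 ≤ Cc := by rw [hCdef]; positivity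
  set K : ℝ := 3 * A * (2 * R) ^ 2 + 2 * B * (2 * R) + Cc with hKdef
  have hK : 0 ≤ K := by rw [hKdef]; positivity
  have htransPd : ∀ ρ : ℝ, transPd n R ρ = A * ρ ^ 3 - B * ρ ^ 2 + Cc * ρ - D := by
    intro ρ
    rw [transPd, hAdef, hBdef, hCdef, hDdef]
  have hpoly : ∀ σ ρ : ℝ, R ≤ σ → σ ≤ ρ → ρ ≤ 2 * R →
      |A2factor n R ρ - A2factor n R σ| ≤ K * (ρ - σ) := by
    intro σ ρ h1 h2 h3
    rw [A2factor_poly (by omega) hR (h1.trans h2) h3, A2factor_poly (by omega) hR h1 (h2.trans h3),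
      htransPd, htransPd, hKdef]
    exact cubic_lip hA hB hC (hR.le.trans h1) h2 h3
  refine ⟨max 1 (K * (2 * R) ^ ((2 : ℝ) - 1 / n)), le_max_left _ _, ?_⟩
  have hC1 : (1 : ℝ) ≤ max 1 (K * (2 * R) ^ ((2 : ℝ) - 1 / n)) := le_max_left _ _
  have hCmax : K * (2 * R) ^ ((2 : ℝ) - 1 / n) ≤ max 1 (K * (2 * R) ^ ((2 : ℝ) - 1 / n)) :=
    le_max_right _ _
  generalize hCgen : max 1 (K * (2 * R) ^ ((2 : ℝ) - 1 / n)) = C at hC1 hCmax ⊢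
  have hC0 : (0 : ℝ) ≤ C := by linarith
  have hCK : ∀ σ : ℝ, 0 < σ → σ ≤ 2 * R → K ≤ C * σ ^ ((1 : ℝ) / n - 2) := by
    intro σ hσ hσ2
    have h1 : (2 * R) ^ ((1 : ℝ) / n - 2) ≤ σ ^ ((1 : ℝ) / n - 2) :=
      Real.rpow_le_rpow_of_nonpos hσ hσ2 (by linarith)
    have h2 : (2 * R) ^ ((2 : ℝ) - 1 / n) * (2 * R) ^ ((1 : ℝ) / n - 2) = 1 := by
      rw [← Real.rpow_add (by linarith)]
      norm_num
    have h3 : K = K * (2 * R) ^ ((2 : ℝ) - 1 / n) * (2 * R) ^ ((1 : ℝ) / n - 2) := by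
      rw [mul_assoc, h2, mul_one]
    rw [h3]
    have h4 : K * (2 * R) ^ ((2 : ℝ) - 1 / n) ≤ C := hCmax
    have h5 : (0 : ℝ) ≤ (2 * R) ^ ((1 : ℝ) / n - 2) := Real.rpow_nonneg (by linarith) _
    calc K * (2 * R) ^ ((2 : ℝ) - 1 / n) * (2 * R) ^ ((1 : ℝ) / n - 2)
        ≤ C * (2 * R) ^ ((1 : ℝ) / n - 2) := mul_le_mul_of_nonneg_right h4 h5
      _ ≤ C * σ ^ ((1 : ℝ) / n - 2) := mul_le_mul_of_nonneg_left h1 hC0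
  intro σ ρ hσ hσρ
  have hσe : (0 : ℝ) ≤ σ ^ ((1 : ℝ) / n - 2) := Real.rpow_nonneg hσ.le _
  have hρσ : (0 : ℝ) ≤ ρ - σ := sub_nonneg.2 hσρ
  have hCσ : (0 : ℝ) ≤ C * σ ^ ((1 : ℝ) / n - 2) := mul_nonneg hC0 hσe
  have hf2R : A2factor n R (2 * R) = 0 := by
    rw [A2factor_poly (by omega) hR (by linarith) le_rfl, transPd_at_2R n (by omega) R hR]
  have hpowC : ∀ σ' ρ' : ℝ, 0 < σ' → σ' ≤ ρ' → ρ' ≤ R →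
      |A2factor n R ρ' - A2factor n R σ'| ≤ C * σ' ^ ((1 : ℝ) / n - 2) * (ρ' - σ') := by
    intro σ' ρ' h1 h2 h3
    have hh := A2_pow_lip hn h1 h2 h3
    have hmul : σ' ^ ((1 : ℝ) / n - 2) * (ρ' - σ') ≤ C * σ' ^ ((1 : ℝ) / n - 2) * (ρ' - σ') := by
      have hnn : (0 : ℝ) ≤ σ' ^ ((1 : ℝ) / n - 2) * (ρ' - σ') :=
        mul_nonneg (Real.rpow_nonneg h1.le _) (by linarith)
      have := mul_le_mul_of_nonneg_right hC1 hnn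
      nlinarith
    linarith
  rcases le_or_gt (2 * R) σ with h6 | hσ2R
  · rw [A2factor_zero hR h6, A2factor_zero hR (h6.trans hσρ), sub_zero, abs_zero]
    exact mul_nonneg hCσ hρσ
  · rcases le_or_gt σ R with hσR | hσR
    · rcases le_or_gt ρ R with hρR | hρR
      · exact hpowC σ ρ hσ hσρ hρR
      · have hRmid : |A2factor n R R - A2factor n R σ| ≤
            C * σ ^ ((1 : ℝ) / n - 2) * (R - σ) := hpowC σ R hσ hσR le_rfl
        rcases le_or_gt ρ (2 * R) with hρ2 | hρ2
        · have h1 : |A2factor n R ρ - A2factor n R R| ≤ K * (ρ - R) :=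
            hpoly R ρ le_rfl hρR.le hρ2
          have h2 : K * (ρ - R) ≤ C * σ ^ ((1 : ℝ) / n - 2) * (ρ - R) :=
            mul_le_mul_of_nonneg_right (hCK σ hσ (by linarith)) (by linarith)
          calc |A2factor n R ρ - A2factor n R σ| ≤
              |A2factor n R ρ - A2factor n R R| + |A2factor n R R - A2factor n R σ| :=
                abs_sub_le _ _ _
            _ ≤ C * σ ^ ((1 : ℝ) / n - 2) * (ρ - R) + C * σ ^ ((1 : ℝ) / n - 2) * (R - σ) :=
                add_le_add (h1.trans h2) hRmid
            _ = C * σ ^ ((1 : ℝ) / n - 2) * (ρ - σ) := by ring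
        · have hfρ : A2factor n R ρ = 0 := A2factor_zero hR hρ2.le
          have h1 : |A2factor n R (2 * R) - A2factor n R R| ≤ K * (2 * R - R) :=
            hpoly R (2 * R) le_rfl (by linarith) le_rfl
          have h2 : K * (2 * R - R) ≤ C * σ ^ ((1 : ℝ) / n - 2) * (2 * R - R) :=
            mul_le_mul_of_nonneg_right (hCK σ hσ (by linarith)) (by linarith)
          calc |A2factor n R ρ - A2factor n R σ|
              = |A2factor n R (2 * R) - A2factor n R σ| := by rw [hfρ, hf2R]
            _ ≤ |A2factor n R (2 * R) - A2factor n R R| + |A2factor n R R - A2factor n R σ| :=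
                abs_sub_le _ _ _
            _ ≤ C * σ ^ ((1 : ℝ) / n - 2) * (2 * R - R) + C * σ ^ ((1 : ℝ) / n - 2) * (R - σ) :=
                add_le_add (h1.trans h2) hRmid
            _ = C * σ ^ ((1 : ℝ) / n - 2) * (2 * R - σ) := by ring
            _ ≤ C * σ ^ ((1 : ℝ) / n - 2) * (ρ - σ) :=
                mul_le_mul_of_nonneg_left (by linarith) hCσ
    · rcases le_or_gt ρ (2 * R) with hρ2 | hρ2
      · have h1 := hpoly σ ρ hσR.le hσρ hρ2
        have h2 : K * (ρ - σ) ≤ C * σ ^ ((1 : ℝ) / n - 2) * (ρ - σ) :=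
          mul_le_mul_of_nonneg_right (hCK σ hσ (by linarith)) hρσ
        exact h1.trans h2
      · have hfρ : A2factor n R ρ = 0 := A2factor_zero hR hρ2.le
        have h1 : |A2factor n R (2 * R) - A2factor n R σ| ≤ K * (2 * R - σ) :=
          hpoly σ (2 * R) hσR.le (by linarith) le_rfl
        have h2 : K * (2 * R - σ) ≤ C * σ ^ ((1 : ℝ) / n - 2) * (2 * R - σ) :=
          mul_le_mul_of_nonneg_right (hCK σ hσ (by linarith)) (by linarith)
        calc |A2factor n R ρ - A2factor n R σ|
            = |A2factor n R (2 * R) - A2factor n R σ| := by rw [hfρ, hf2R]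
          _ ≤ C * σ ^ ((1 : ℝ) / n - 2) * (2 * R - σ) := h1.trans h2
          _ ≤ C * σ ^ ((1 : ℝ) / n - 2) * (ρ - σ) :=
              mul_le_mul_of_nonneg_left (by linarith) hCσ

set_option maxHeartbeats 1000000 in
lemma A2_bound (n : ℕ) (hn : 2 ≤ n) (R : ℝ) (hR : 0 < R) :
    ∃ C : ℝ, 0 ≤ C ∧ ∀ ρ : ℝ, 0 ≤ ρ → |A2factor n R ρ| ≤ C * ρ ^ ((1 : ℝ) / n - 1) := by
  have hn0 : (0 : ℝ) < n := by
    have : 0 < n := by omega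
    exact_mod_cast this
  have h1n : 0 < 1 / (n : ℝ) := one_div_pos.2 hn0
  have hle1 : (1 : ℝ) / n ≤ 1 := by
    rw [div_le_one hn0]
    exact_mod_cast by omega
  set A : ℝ := (n + 1) * R ^ ((1 : ℝ) / n - 4) / (n ^ 2) with hAdef
  set B : ℝ := (4 * n + 5) * R ^ ((1 : ℝ) / n - 3) / (n ^ 2) with hBdef
  set Cc : ℝ := 4 * (n + 2) * R ^ ((1 : ℝ) / n - 2) / (n ^ 2) with hCdef
  set D : ℝ := 4 * R ^ ((1 : ℝ) / n - 1) / (n ^ 2) with hDdef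
  have hA : 0 ≤ A := by rw [hAdef]; positivity
  have hB : 0 ≤ B := by rw [hBdef]; positivity
  have hC : 0 ≤ Cc := by rw [hCdef]; positivity
  have hD : 0 ≤ D := by rw [hDdef]; positivity
  set K : ℝ := A * (2 * R) ^ 3 + B * (2 * R) ^ 2 + Cc * (2 * R) + D with hKdef
  refine ⟨max 1 (K * (2 * R) ^ ((1 : ℝ) - 1 / n)), by positivity, ?_⟩
  have hC1 : (1 : ℝ) ≤ max 1 (K * (2 * R) ^ ((1 : ℝ) - 1 / n)) := le_max_left _ _
  have hCmax : K * (2 * R) ^ ((1 : ℝ) - 1 / n) ≤ max 1 (K * (2 * R) ^ ((1 : ℝ) - 1 / n)) :=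
    le_max_right _ _
  generalize hCgen : max 1 (K * (2 * R) ^ ((1 : ℝ) - 1 / n)) = C at hC1 hCmax ⊢
  have hC0 : (0 : ℝ) ≤ C := by linarith
  intro ρ hρ
  have hρe : (0 : ℝ) ≤ ρ ^ ((1 : ℝ) / n - 1) := Real.rpow_nonneg hρ _
  rcases le_or_gt ρ R with h1 | h1
  · rw [A2factor_pow h1, abs_mul, abs_of_nonneg (Real.rpow_nonneg hρ _)]
    have hle1' : |(1 : ℝ) / n| ≤ 1 := by
      rw [abs_of_nonneg (by positivity)]
      exact hle1
    nlinarith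
  · rcases le_or_gt (2 * R) ρ with h2 | h2
    · rw [A2factor_zero hR h2, abs_zero]
      exact mul_nonneg hC0 hρe
    · rw [A2factor_poly (by omega) hR h1.le h2.le, show transPd n R ρ =
        A * ρ ^ 3 - B * ρ ^ 2 + Cc * ρ - D by rw [transPd, hAdef, hBdef, hCdef, hDdef]]
      have hb := cubic_bound hA hB hC hD hρ h2.le
      have hmono : (2 * R) ^ ((1 : ℝ) / n - 1) ≤ ρ ^ ((1 : ℝ) / n - 1) :=
        Real.rpow_le_rpow_of_nonpos (by linarith) h2.le (by linarith)
      have hid : (2 * R) ^ ((1 : ℝ) - 1 / n) * (2 * R) ^ ((1 : ℝ) / n - 1) = 1 := by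
        rw [← Real.rpow_add (by linarith)]
        norm_num
      have hK0 : 0 ≤ K := by rw [hKdef]; positivity
      have h3 : K = K * (2 * R) ^ ((1 : ℝ) - 1 / n) * (2 * R) ^ ((1 : ℝ) / n - 1) := by
        rw [mul_assoc, hid, mul_one]
      have h4 : K * (2 * R) ^ ((1 : ℝ) - 1 / n) ≤ C := hCmax
      have h5 : (0 : ℝ) ≤ (2 * R) ^ ((1 : ℝ) / n - 1) := Real.rpow_nonneg (by linarith) _
      calc |A * ρ ^ 3 - B * ρ ^ 2 + Cc * ρ - D| ≤ K := hb
        _ = K * (2 * R) ^ ((1 : ℝ) - 1 / n) * (2 * R) ^ ((1 : ℝ) / n - 1) := h3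
        _ ≤ C * (2 * R) ^ ((1 : ℝ) / n - 1) := mul_le_mul_of_nonneg_right h4 h5
        _ ≤ C * ρ ^ ((1 : ℝ) / n - 1) := mul_le_mul_of_nonneg_left hmono hC0

lemma euclidean_coord_le {N : ℕ} (Ψ : EuclideanSpace ℂ (Fin N)) (j : Fin N) : ‖Ψ j‖ ≤ ‖Ψ‖ := by
  rw [EuclideanSpace.norm_eq]
  rw [show ‖Ψ j‖ = Real.sqrt (‖Ψ j‖ ^ 2) from (Real.sqrt_sq (norm_nonneg _)).symm]
  exact Real.sqrt_le_sqrt (Finset.single_le_sum (fun i _ => sq_nonneg ‖Ψ i‖) (Finset.mem_univ j))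

set_option maxHeartbeats 1000000 in
/-- Each component map `Ψ ↦ f(|Ψ|²) ψ_j ψ_m` is Hölder continuous on `ℂ^N`
with exponent `α = 2/n`. -/
theorem stmt6 (N n : ℕ) (hn : n = 2 ∨ n = 3) (R : ℝ) (hR : 0 < R) :
    ∃ c : ℝ, ∀ (Ψ Φ : EuclideanSpace ℂ (Fin N)) (j m : Fin N),
      ‖(A2factor n R (‖Ψ‖ ^ 2) : ℂ) * Ψ j * Ψ m -
          (A2factor n R (‖Φ‖ ^ 2) : ℂ) * Φ j * Φ m‖ ≤
        c * ‖Ψ - Φ‖ ^ ((2 : ℝ) / n) := by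
  have hnn : 2 ≤ n := by rcases hn with rfl | rfl <;> norm_num
  have hn0 : (0 : ℝ) < n := by
    have : 0 < n := by omega
    exact_mod_cast this
  have hα0 : (0 : ℝ) < 2 / n := by positivity
  have hα1 : (2 : ℝ) / n ≤ 1 := by
    rw [div_le_one hn0]
    exact_mod_cast hnn
  obtain ⟨C₁, hC₁0, hC₁⟩ := A2_bound n hnn R hR
  obtain ⟨C₃, hC₃1, hC₃⟩ := A2_lip n hnn R hR
  have hC₃0 : (0 : ℝ) ≤ C₃ := by linarith
  have hg : ∀ (Ψ : EuclideanSpace ℂ (Fin N)) (j m : Fin N),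
      ‖(A2factor n R (‖Ψ‖ ^ 2) : ℂ) * Ψ j * Ψ m‖ ≤ C₁ * ‖Ψ‖ ^ ((2 : ℝ) / n) := by
    intro Ψ j m
    have hb := hC₁ (‖Ψ‖ ^ 2) (by positivity)
    have hnorm : ‖(A2factor n R (‖Ψ‖ ^ 2) : ℂ) * Ψ j * Ψ m‖ =
        |A2factor n R (‖Ψ‖ ^ 2)| * ‖Ψ j‖ * ‖Ψ m‖ := by
      rw [norm_mul, norm_mul, Complex.norm_real, Real.norm_eq_abs]
    rw [hnorm]
    rcases eq_or_lt_of_le (norm_nonneg Ψ) with h0 | h0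
    · have hΨ0 : Ψ = 0 := norm_eq_zero.1 h0.symm
      rw [hΨ0]
      have hz : ‖(0 : EuclideanSpace ℂ (Fin N)) m‖ = 0 := by simp
      rw [hz, mul_zero]
      exact mul_nonneg hC₁0 (Real.rpow_nonneg (norm_nonneg _) _)
    · have key : (‖Ψ‖ ^ 2) ^ ((1 : ℝ) / n - 1) * ‖Ψ‖ * ‖Ψ‖ = ‖Ψ‖ ^ ((2 : ℝ) / n) := by
        rw [← Real.rpow_natCast ‖Ψ‖ 2, ← Real.rpow_mul h0.le,
          ← Real.rpow_add_one h0.ne', ← Real.rpow_add_one h0.ne',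
          show ((2 : ℕ) : ℝ) * ((1 : ℝ) / n - 1) + 1 + 1 = (2 : ℝ) / n by push_cast; ring]
      calc |A2factor n R (‖Ψ‖ ^ 2)| * ‖Ψ j‖ * ‖Ψ m‖
          ≤ (C₁ * (‖Ψ‖ ^ 2) ^ ((1 : ℝ) / n - 1)) * ‖Ψ‖ * ‖Ψ‖ := by
            have h1 : (0 : ℝ) ≤ C₁ * (‖Ψ‖ ^ 2) ^ ((1 : ℝ) / n - 1) :=
              mul_nonneg hC₁0 (Real.rpow_nonneg (by positivity) _)
            have h2 := euclidean_coord_le Ψ j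
            have h3 := euclidean_coord_le Ψ m
            have h4 : |A2factor n R (‖Ψ‖ ^ 2)| * ‖Ψ j‖ ≤
                (C₁ * (‖Ψ‖ ^ 2) ^ ((1 : ℝ) / n - 1)) * ‖Ψ‖ :=
              mul_le_mul hb h2 (norm_nonneg _) h1
            exact mul_le_mul h4 h3 (norm_nonneg _) (by positivity)
        _ = C₁ * ‖Ψ‖ ^ ((2 : ℝ) / n) := by
            rw [mul_assoc, mul_assoc, ← mul_assoc ((‖Ψ‖ ^ 2) ^ ((1 : ℝ) / n - 1)), key]
  have key : ∀ (Ψ Φ : EuclideanSpace ℂ (Fin N)) (j m : Fin N), ‖Φ‖ ≤ ‖Ψ‖ →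
      ‖(A2factor n R (‖Ψ‖ ^ 2) : ℂ) * Ψ j * Ψ m -
          (A2factor n R (‖Φ‖ ^ 2) : ℂ) * Φ j * Φ m‖ ≤
        (5 * C₁ + 4 * C₃) * ‖Ψ - Φ‖ ^ ((2 : ℝ) / n) := by
    intro Ψ Φ j m hΦΨ
    set h := ‖Ψ - Φ‖ with hhdef
    have hh0 : 0 ≤ h := norm_nonneg _
    rcases eq_or_lt_of_le hh0 with hh | hh
    · have : Ψ = Φ := by
        rw [← sub_eq_zero]
        exact norm_eq_zero.1 hh.symm
      subst this
      rw [sub_self, norm_zero, ← hh, Real.zero_rpow (by positivity), mul_zero]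
    · have hhα : (0 : ℝ) ≤ h ^ ((2 : ℝ) / n) := Real.rpow_nonneg hh0 _
      rcases le_or_gt ‖Φ‖ h with hcase | hcase
      · -- Case A : both norms ≤ 2h
        have hΨ2h : ‖Ψ‖ ≤ 2 * h := by
          have := norm_sub_norm_le Ψ Φ
          rw [← hhdef] at this
          linarith
        have b1 := hg Ψ j m
        have b2 := hg Φ j m
        have m1 : ‖Ψ‖ ^ ((2 : ℝ) / n) ≤ (2 * h) ^ ((2 : ℝ) / n) :=
          Real.rpow_le_rpow (norm_nonneg _) hΨ2h hα0.le
        have m2 : ‖Φ‖ ^ ((2 : ℝ) / n) ≤ h ^ ((2 : ℝ) / n) :=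
          Real.rpow_le_rpow (norm_nonneg _) hcase hα0.le
        have m3 : (2 * h) ^ ((2 : ℝ) / n) ≤ 2 * h ^ ((2 : ℝ) / n) := by
          rw [Real.mul_rpow (by norm_num) hh0]
          have h22 : (2 : ℝ) ^ ((2 : ℝ) / n) ≤ 2 ^ (1 : ℝ) :=
            Real.rpow_le_rpow_of_exponent_le (by norm_num) hα1
          rw [Real.rpow_one] at h22
          exact mul_le_mul_of_nonneg_right h22 hhα
        have e1 : C₁ * ‖Ψ‖ ^ ((2 : ℝ) / n) ≤ C₁ * (2 * h ^ ((2 : ℝ) / n)) :=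
          mul_le_mul_of_nonneg_left (m1.trans m3) hC₁0
        have e2 : C₁ * ‖Φ‖ ^ ((2 : ℝ) / n) ≤ C₁ * h ^ ((2 : ℝ) / n) :=
          mul_le_mul_of_nonneg_left m2 hC₁0
        have e3 : (0:ℝ) ≤ C₃ * h ^ ((2 : ℝ) / n) := mul_nonneg hC₃0 hhα
        have e4 : (0:ℝ) ≤ C₁ * h ^ ((2 : ℝ) / n) := mul_nonneg hC₁0 hhα
        calc ‖(A2factor n R (‖Ψ‖ ^ 2) : ℂ) * Ψ j * Ψ m -
              (A2factor n R (‖Φ‖ ^ 2) : ℂ) * Φ j * Φ m‖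
            ≤ ‖(A2factor n R (‖Ψ‖ ^ 2) : ℂ) * Ψ j * Ψ m‖ +
              ‖(A2factor n R (‖Φ‖ ^ 2) : ℂ) * Φ j * Φ m‖ := norm_sub_le _ _
          _ ≤ (5 * C₁ + 4 * C₃) * h ^ ((2 : ℝ) / n) := by
              have w1 := b1.trans e1
              have w2 := b2.trans e2
              nlinarith [w1, w2, e3, e4]
      · -- Case B : h < ‖Φ‖ ≤ ‖Ψ‖
        set s := ‖Φ‖ with hsdef
        set t := ‖Ψ‖ with htdef
        have hs0 : 0 < s := hh.trans hcase
        have ht0 : 0 < t := hs0.trans_le hΦΨ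
        have hts : t - s ≤ h := by
          have := norm_sub_norm_le Ψ Φ
          rw [← hhdef, ← hsdef, ← htdef] at this
          linarith
        set a := A2factor n R (t ^ 2) with hadef
        set b := A2factor n R (s ^ 2) with hbdef
        have hsplit : (a : ℂ) * Ψ j * Ψ m - (b : ℂ) * Φ j * Φ m =
            (a : ℂ) * (Ψ j * Ψ m - Φ j * Φ m) + ((a - b : ℝ) : ℂ) * (Φ j * Φ m) := by
          push_cast
          ring
        rw [hsplit]
        have hδj : ‖Ψ j - Φ j‖ ≤ h := by
          have := euclidean_coord_le (Ψ - Φ) j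
          simpa using this
        have hδm : ‖Ψ m - Φ m‖ ≤ h := by
          have := euclidean_coord_le (Ψ - Φ) m
          simpa using this
        have hprod : ‖Ψ j * Ψ m - Φ j * Φ m‖ ≤ 2 * t * h := by
          have hid : Ψ j * Ψ m - Φ j * Φ m = Ψ j * (Ψ m - Φ m) + (Ψ j - Φ j) * Φ m := by ring
          rw [hid]
          have h1 := euclidean_coord_le Ψ j
          have h2 := euclidean_coord_le Φ m
          rw [← htdef] at h1
          rw [← hsdef] at h2
          have w1 : ‖Ψ j‖ * ‖Ψ m - Φ m‖ ≤ t * h :=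
            mul_le_mul h1 hδm (norm_nonneg _) ht0.le
          have w2 : ‖Ψ j - Φ j‖ * ‖Φ m‖ ≤ h * s :=
            mul_le_mul hδj h2 (norm_nonneg _) hh0
          calc ‖Ψ j * (Ψ m - Φ m) + (Ψ j - Φ j) * Φ m‖
              ≤ ‖Ψ j‖ * ‖Ψ m - Φ m‖ + ‖Ψ j - Φ j‖ * ‖Φ m‖ := by
                refine (norm_add_le _ _).trans ?_
                rw [norm_mul, norm_mul]
            _ ≤ t * h + h * s := by linarith
            _ ≤ 2 * t * h := by nlinarith
        have ha : |a| ≤ C₁ * (t ^ 2) ^ ((1 : ℝ) / n - 1) := hC₁ _ (by positivity)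
        have hab : |a - b| ≤ C₃ * (s ^ 2) ^ ((1 : ℝ) / n - 2) * (t ^ 2 - s ^ 2) :=
          hC₃ (s ^ 2) (t ^ 2) (by positivity) (by nlinarith)
        have hid1 : (t ^ 2) ^ ((1 : ℝ) / n - 1) * (2 * t * h) =
            2 * t ^ ((2 : ℝ) / n - 1) * h := by
          rw [← Real.rpow_natCast t 2, ← Real.rpow_mul ht0.le]
          rw [show (t ^ (((2 : ℕ) : ℝ) * ((1 : ℝ) / n - 1))) * (2 * t * h) =
            2 * (t ^ (((2 : ℕ) : ℝ) * ((1 : ℝ) / n - 1)) * t) * h by ring]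
          rw [← Real.rpow_add_one ht0.ne',
            show ((2 : ℕ) : ℝ) * ((1 : ℝ) / n - 1) + 1 = (2 : ℝ) / n - 1 by push_cast; ring]
        have hid2 : (s ^ 2) ^ ((1 : ℝ) / n - 2) * s ^ 2 * s = s ^ ((2 : ℝ) / n - 1) := by
          rw [← Real.rpow_natCast s 2, ← Real.rpow_mul hs0.le, ← Real.rpow_add hs0,
            ← Real.rpow_add_one hs0.ne',
            show ((2 : ℕ) : ℝ) * ((1 : ℝ) / n - 2) + ((2 : ℕ) : ℝ) + 1 = (2 : ℝ) / n - 1 by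
              push_cast; ring]
        have hmt : t ^ ((2 : ℝ) / n - 1) ≤ h ^ ((2 : ℝ) / n - 1) :=
          Real.rpow_le_rpow_of_nonpos hh (hcase.le.trans hΦΨ) (by linarith)
        have hms : s ^ ((2 : ℝ) / n - 1) ≤ h ^ ((2 : ℝ) / n - 1) :=
          Real.rpow_le_rpow_of_nonpos hh hcase.le (by linarith)
        have hhα' : h ^ ((2 : ℝ) / n - 1) * h = h ^ ((2 : ℝ) / n) := by
          rw [← Real.rpow_add_one hh.ne',
            show (2 : ℝ) / n - 1 + 1 = (2 : ℝ) / n by ring]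
        have ht2s : t ≤ 2 * s := by linarith
        have hdiff : t ^ 2 - s ^ 2 ≤ 4 * s * h := by nlinarith
        have hterm1 : ‖(a : ℂ) * (Ψ j * Ψ m - Φ j * Φ m)‖ ≤ 2 * C₁ * h ^ ((2 : ℝ) / n) := by
          rw [norm_mul, Complex.norm_real, Real.norm_eq_abs]
          calc |a| * ‖Ψ j * Ψ m - Φ j * Φ m‖
              ≤ (C₁ * (t ^ 2) ^ ((1 : ℝ) / n - 1)) * (2 * t * h) :=
                mul_le_mul ha hprod (norm_nonneg _)
                  (mul_nonneg hC₁0 (Real.rpow_nonneg (by positivity) _))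
            _ = C₁ * (2 * t ^ ((2 : ℝ) / n - 1) * h) := by rw [mul_assoc, hid1]
            _ ≤ C₁ * (2 * h ^ ((2 : ℝ) / n - 1) * h) := by
                have w : 2 * t ^ ((2 : ℝ) / n - 1) * h ≤ 2 * h ^ ((2 : ℝ) / n - 1) * h := by
                  nlinarith
                exact mul_le_mul_of_nonneg_left w hC₁0
            _ = 2 * C₁ * h ^ ((2 : ℝ) / n) := by rw [mul_assoc 2, hhα']; ring
        have hterm2 : ‖((a - b : ℝ) : ℂ) * (Φ j * Φ m)‖ ≤ 4 * C₃ * h ^ ((2 : ℝ) / n) := by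
          rw [norm_mul, Complex.norm_real, Real.norm_eq_abs, norm_mul]
          have hΦjm : ‖Φ j‖ * ‖Φ m‖ ≤ s ^ 2 := by
            have h1 := euclidean_coord_le Φ j
            have h2 := euclidean_coord_le Φ m
            rw [← hsdef] at h1 h2
            nlinarith [norm_nonneg (Φ j), norm_nonneg (Φ m)]
          calc |a - b| * (‖Φ j‖ * ‖Φ m‖)
              ≤ (C₃ * (s ^ 2) ^ ((1 : ℝ) / n - 2) * (t ^ 2 - s ^ 2)) * s ^ 2 := by
                apply mul_le_mul hab hΦjm (mul_nonneg (norm_nonneg _) (norm_nonneg _))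
                apply mul_nonneg (mul_nonneg hC₃0 (Real.rpow_nonneg (by positivity) _))
                nlinarith
            _ ≤ (C₃ * (s ^ 2) ^ ((1 : ℝ) / n - 2) * (4 * s * h)) * s ^ 2 := by
                have hnn : (0 : ℝ) ≤ C₃ * (s ^ 2) ^ ((1 : ℝ) / n - 2) :=
                  mul_nonneg hC₃0 (Real.rpow_nonneg (by positivity) _)
                exact mul_le_mul_of_nonneg_right
                  (mul_le_mul_of_nonneg_left hdiff hnn) (sq_nonneg s)
            _ = 4 * C₃ * (s ^ ((2 : ℝ) / n - 1) * h) := by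
                rw [← hid2]
                ring
            _ ≤ 4 * C₃ * (h ^ ((2 : ℝ) / n - 1) * h) := by
                have w : s ^ ((2 : ℝ) / n - 1) * h ≤ h ^ ((2 : ℝ) / n - 1) * h :=
                  mul_le_mul_of_nonneg_right hms hh0
                have : (0:ℝ) ≤ 4 * C₃ := by linarith
                exact mul_le_mul_of_nonneg_left w this
            _ = 4 * C₃ * h ^ ((2 : ℝ) / n) := by rw [hhα']
        calc ‖(a : ℂ) * (Ψ j * Ψ m - Φ j * Φ m) + ((a - b : ℝ) : ℂ) * (Φ j * Φ m)‖
            ≤ ‖(a : ℂ) * (Ψ j * Ψ m - Φ j * Φ m)‖ + ‖((a - b : ℝ) : ℂ) * (Φ j * Φ m)‖ :=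
              norm_add_le _ _
          _ ≤ 2 * C₁ * h ^ ((2 : ℝ) / n) + 4 * C₃ * h ^ ((2 : ℝ) / n) := by linarith
          _ ≤ (5 * C₁ + 4 * C₃) * h ^ ((2 : ℝ) / n) := by
              have e4 : (0:ℝ) ≤ C₁ * h ^ ((2 : ℝ) / n) := mul_nonneg hC₁0 hhα
              nlinarith [e4]
  refine ⟨5 * C₁ + 4 * C₃, ?_⟩
  intro Ψ Φ j m
  rcases le_total ‖Φ‖ ‖Ψ‖ with hle | hle
  · exact key Ψ Φ j m hle
  · rw [norm_sub_rev, show ‖Ψ - Φ‖ = ‖Φ - Ψ‖ from norm_sub_rev _ _]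
    exact key Φ Ψ j m hle
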